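/- Exact solution of the recombination ODE: with ω_t := ∑_{G⊆L} a_G(t) R_G(ω₀) for a finite positive measure ω₀, the family ω_t satisfies d/dt ω_t = ∑_{α∈L} ρ_α (R_α(ω_t) − ω_t) with ω_0 = ω₀; moreover ω_t is a positive measure of the same total mass as ω₀ for all t ≥ 0. -/

import Mathlib

open Finset

namespace Recombination

variable {n : ℕ} (X : Fin (n + 1) → Type*) [∀ i, Fintype (X i)] [∀ i, DecidableEq (X i)]

/-- (Signed) measures on the finite product space `X = X₀ × ⋯ × Xₙ`,
identified with their density functions. -/
abbrev Meas := (∀ i, X i) → ℝ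

/-- Total variation norm of a measure. -/
noncomputable def tv (ω : Meas X) : ℝ := ∑ x, |ω x|

/-- Total mass of a measure. -/
noncomputable def mass (ω : Meas X) : ℝ := ∑ x, ω x

/-- Positivity of a measure. -/
def Pos (ω : Meas X) : Prop := ∀ x, 0 ≤ ω x

/-- Marginal (pushforward under the coordinate projection onto the sites
satisfying `p`) of a measure. -/
noncomputable def marg (p : Fin (n + 1) → Prop) [DecidablePred p] (ω : Meas X) :
    (∀ i : {i // p i}, X i.1) → ℝ :=
  fun y => ∑ x : ∀ i, X i, if (∀ i : {i // p i}, x i.1 = y i) then ω x else 0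

/-- Product measure of a measure on the leading block (sites satisfying `p`)
and a measure on the trailing block. -/
noncomputable def prodM (p : Fin (n + 1) → Prop) [DecidablePred p]
    (f : (∀ i : {i // p i}, X i.1) → ℝ) (g : (∀ i : {i // ¬ p i}, X i.1) → ℝ) :
    Meas X :=
  fun x => f (fun i => x i.1) * g (fun i => x i.1)

open Classical in
/-- The elementary recombinator at link `α` (the link between sites `α` and `α+1`):
`R_α(ω) = ((π_{<α}.ω) ⊗ (π_{>α}.ω))/‖ω‖` for `ω ≠ 0`, and `R_α(0) = 0`. -/
noncomputable def R (α : Fin n) (ω : Meas X) : Meas X :=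
  if ω = 0 then 0 else
    (tv X ω)⁻¹ • prodM X (fun i => i.val ≤ α.val)
      (marg X (fun i => i.val ≤ α.val) ω) (marg X (fun i => ¬ i.val ≤ α.val) ω)

/-- The composite recombinator `R_G = ∏_{α ∈ G} R_α`. -/
noncomputable def RG (G : Finset (Fin n)) (ω : Meas X) : Meas X :=
  (G.sort (· ≤ ·)).foldr (fun α ν => R X α ν) ω

/-- The coefficient functions `a_G(t)` of the single-crossover model. -/
noncomputable def coeffA (ρ : Fin n → ℝ) (G : Finset (Fin n)) (t : ℝ) : ℝ :=
  (∏ α ∈ Gᶜ, Real.exp (-(ρ α * t))) * ∏ β ∈ G, (1 - Real.exp (-(ρ β * t)))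

/-- The coefficient functions `b_K(t) = exp(−t ∑_{α∈L∖K} ρ_α)`. -/
noncomputable def coeffB (ρ : Fin n → ℝ) (K : Finset (Fin n)) (t : ℝ) : ℝ :=
  Real.exp (-(∑ α ∈ Kᶜ, ρ α) * t)

/-- The linkage-disequilibrium operators `T_G = ∑_{H ⊇ G} (−1)^{|H∖G|} R_H`. -/
noncomputable def T (G : Finset (Fin n)) (ω : Meas X) : Meas X :=
  ∑ H ∈ (Finset.univ : Finset (Fin n)).powerset.filter (fun H => G ⊆ H),
    ((-1 : ℝ) ^ (H \ G).card) • RG X H ω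

/-- The solution `ω_t = ∑_{G⊆L} a_G(t) R_G(ω₀)` of the recombination equation. -/
noncomputable def sol (ρ : Fin n → ℝ) (ω₀ : Meas X) (t : ℝ) : Meas X :=
  ∑ G ∈ (Finset.univ : Finset (Fin n)).powerset, coeffA ρ G t • RG X G ω₀

/-- The one-site marginal at site `i`. -/
noncomputable def marg1 (i : Fin (n + 1)) (ω : Meas X) (y : X i) : ℝ :=
  ∑ x : ∀ j, X j, if x i = y then ω x else 0

set_option linter.unusedSectionVars false

/-! ### Groundwork -/

/-- collapse a sum over a pi type against the diagonal condition -/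
lemma sum_ite_eq_pi {ι : Type*} [Fintype ι] [DecidableEq ι] (Y : ι → Type*)
    [∀ i, Fintype (Y i)] [∀ i, DecidableEq (Y i)] (y : ∀ i, Y i) (F : (∀ i, Y i) → ℝ)
    (C : (∀ i, Y i) → Prop) [DecidablePred C] (hC : ∀ u, C u ↔ u = y) :
    ∑ u, (if C u then F u else 0) = F y := by
  rw [Finset.sum_congr rfl (fun u _ => by rw [if_congr (hC u) rfl rfl])]
  rw [Finset.sum_ite_eq' Finset.univ y F]
  simp

lemma marg_zero (p : Fin (n + 1) → Prop) [DecidablePred p] : marg X p 0 = 0 := by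
  funext y; simp [marg]

lemma marg_smul (p : Fin (n + 1) → Prop) [DecidablePred p] (c : ℝ) (ω : Meas X) :
    marg X p (c • ω) = c • marg X p ω := by
  funext y
  simp only [marg, Pi.smul_apply, smul_eq_mul, Finset.mul_sum, mul_ite, mul_zero]

lemma marg_nonneg (p : Fin (n + 1) → Prop) [DecidablePred p] {ω : Meas X} (h : Pos X ω) :
    ∀ y, 0 ≤ marg X p ω y := by
  intro y
  exact Finset.sum_nonneg fun x _ => by split <;> simp [h x]

/-- re-fibering a sum over the whole space along a marginal -/
lemma sum_mul_marg (p : Fin (n + 1) → Prop) [DecidablePred p]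
    (φ : (∀ i : {i // p i}, X i.1) → ℝ) (ω : Meas X) :
    ∑ y, φ y * marg X p ω y = ∑ x, φ (fun i => x i.1) * ω x := by
  unfold marg
  simp only [Finset.mul_sum, mul_ite, mul_zero]
  rw [Finset.sum_comm]
  refine Finset.sum_congr rfl fun x _ => ?_
  have : ∀ y : (∀ i : {i // p i}, X i.1),
      (∀ i : {i // p i}, x i.1 = y i) ↔ (fun i : {i // p i} => x i.1) = y := by
    intro y; rw [funext_iff]
  rw [Finset.sum_congr rfl (fun y _ => by rw [if_congr (this y) rfl rfl])]
  simp

lemma sum_marg (p : Fin (n + 1) → Prop) [DecidablePred p] (ω : Meas X) :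
    ∑ y, marg X p ω y = mass X ω := by
  have := sum_mul_marg X p (fun _ => 1) ω
  simpa [mass] using this

/-- splitting a sum over the whole space along a predicate -/
lemma sum_split (q : Fin (n + 1) → Prop) [DecidablePred q] (Φ : (∀ i, X i) → ℝ) :
    ∑ x, Φ x = ∑ u : ∀ i : {i // q i}, X i.1, ∑ v : ∀ i : {i // ¬ q i}, X i.1,
      Φ (fun i => if h : q i then u ⟨i, h⟩ else v ⟨i, h⟩) := by
  rw [← Equiv.sum_comp (Equiv.piEquivPiSubtypeProd q X).symm Φ, Fintype.sum_prod_type]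
  rfl

/-- The master formula: a marginal of a product measure splits as a product. -/
lemma marg_prodM (p : Fin (n + 1) → Prop) [DecidablePred p]
    (r : Fin (n + 1) → Prop) [DecidablePred r]
    (F : (∀ i : {i // r i}, X i.1) → ℝ) (G : (∀ i : {i // ¬ r i}, X i.1) → ℝ)
    (y : ∀ i : {i // p i}, X i.1) :
    marg X p (prodM X r F G) y =
      (∑ u : ∀ i : {i // r i}, X i.1,
        if (∀ i : {i // r i}, ∀ h : p i.1, u i = y ⟨i.1, h⟩) then F u else 0) *
      (∑ v : ∀ i : {i // ¬ r i}, X i.1,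
        if (∀ i : {i // ¬ r i}, ∀ h : p i.1, v i = y ⟨i.1, h⟩) then G v else 0) := by
  unfold marg prodM
  rw [sum_split X r]
  rw [Finset.sum_mul_sum]
  refine Finset.sum_congr rfl fun u _ => Finset.sum_congr rfl fun v _ => ?_
  have h1 : (fun i : {i // r i} =>
      (fun i => if h : r i then u ⟨i, h⟩ else v ⟨i, h⟩) i.1) = u := by
    funext i; simp [i.2]
  have h2 : (fun i : {i // ¬ r i} =>
      (fun i => if h : r i then u ⟨i, h⟩ else v ⟨i, h⟩) i.1) = v := by
    funext i; simp [i.2]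
  have hcond : (∀ i : {i // p i},
        (if h : r i.1 then u ⟨i.1, h⟩ else v ⟨i.1, h⟩) = y i) ↔
      ((∀ i : {i // r i}, ∀ h : p i.1, u i = y ⟨i.1, h⟩) ∧
       (∀ i : {i // ¬ r i}, ∀ h : p i.1, v i = y ⟨i.1, h⟩)) := by
    constructor
    · intro H
      constructor
      · intro i h
        have := H ⟨i.1, h⟩
        rwa [dif_pos i.2] at this
      · intro i h
        have := H ⟨i.1, h⟩
        rwa [dif_neg i.2] at this
    · intro ⟨H1, H2⟩ i
      by_cases h : r i.1
      · rw [dif_pos h]; exact H1 ⟨i.1, h⟩ i.2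
      · rw [dif_neg h]; exact H2 ⟨i.1, h⟩ i.2
  rw [h1, h2, if_congr hcond rfl rfl]
  by_cases hA : (∀ i : {i // r i}, ∀ h : p i.1, u i = y ⟨i.1, h⟩) <;>
    by_cases hB : (∀ i : {i // ¬ r i}, ∀ h : p i.1, v i = y ⟨i.1, h⟩)
  · rw [if_pos ⟨hA, hB⟩, if_pos hA, if_pos hB]
  · rw [if_neg (fun h => hB h.2), if_neg hB, mul_zero]
  · rw [if_neg (fun h => hA h.1), if_neg hA, zero_mul]
  · rw [if_neg (fun h => hA h.1), if_neg hA, zero_mul]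

/-! ### mass and positivity basics -/

lemma mass_zero : mass X (0 : Meas X) = 0 := by simp [mass]

lemma mass_smul (c : ℝ) (ω : Meas X) : mass X (c • ω) = c * mass X ω := by
  simp [mass, Finset.mul_sum]

lemma mass_nonneg_of_pos {ω : Meas X} (h : Pos X ω) : 0 ≤ mass X ω :=
  Finset.sum_nonneg fun x _ => h x

lemma tv_eq_mass {ω : Meas X} (h : Pos X ω) : tv X ω = mass X ω :=
  Finset.sum_congr rfl fun x _ => abs_of_nonneg (h x)

lemma eq_zero_of_mass_eq_zero {ω : Meas X} (h : Pos X ω) (hm : mass X ω = 0) : ω = 0 := by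
  funext x
  have := (Finset.sum_eq_zero_iff_of_nonneg (fun x _ => h x)).1 hm x (Finset.mem_univ x)
  simpa using this

lemma mass_pos_of_ne_zero {ω : Meas X} (h : Pos X ω) (hω : ω ≠ 0) : 0 < mass X ω := by
  rcases lt_or_eq_of_le (mass_nonneg_of_pos X h) with h' | h'
  · exact h'
  · exact absurd (eq_zero_of_mass_eq_zero X h h'.symm) hω

lemma ne_zero_of_mass_pos {ω : Meas X} (hm : 0 < mass X ω) : ω ≠ 0 := by
  intro h; rw [h, mass_zero] at hm; exact lt_irrefl 0 hm

/-! ### marginals of product measures -/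

lemma marg_prodM_self (q : Fin (n + 1) → Prop) [DecidablePred q]
    (F : (∀ i : {i // q i}, X i.1) → ℝ) (G : (∀ i : {i // ¬ q i}, X i.1) → ℝ) :
    marg X q (prodM X q F G) = fun y => F y * ∑ v, G v := by
  funext y
  rw [marg_prodM]
  congr 1
  · exact sum_ite_eq_pi _ y F _ (fun u => by
      constructor
      · intro H; funext i; exact H i i.2
      · intro H i h; rw [H])
  · refine Finset.sum_congr rfl fun v _ => if_pos (fun i h => absurd h i.2)

lemma marg_prodM_compl (q : Fin (n + 1) → Prop) [DecidablePred q]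
    (F : (∀ i : {i // q i}, X i.1) → ℝ) (G : (∀ i : {i // ¬ q i}, X i.1) → ℝ) :
    marg X (fun i => ¬ q i) (prodM X q F G) = fun z => (∑ u, F u) * G z := by
  funext z
  rw [marg_prodM]
  congr 1
  · refine Finset.sum_congr rfl fun u _ => if_pos (fun i h => absurd i.2 h)
  · exact sum_ite_eq_pi _ z G _ (fun v => by
      constructor
      · intro H; funext i; exact H i i.2
      · intro H i h; rw [H])

lemma mass_prodM (q : Fin (n + 1) → Prop) [DecidablePred q]
    (F : (∀ i : {i // q i}, X i.1) → ℝ) (G : (∀ i : {i // ¬ q i}, X i.1) → ℝ) :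
    mass X (prodM X q F G) = (∑ u, F u) * (∑ v, G v) := by
  rw [← sum_marg X q, marg_prodM_self X q]
  rw [← Finset.sum_mul]

/-! ### basic properties of R -/

lemma R_zero (α : Fin n) : R X α 0 = 0 := by simp [R]

lemma R_apply_ne_zero (α : Fin n) (ω : Meas X) (h : ω ≠ 0) :
    R X α ω = (tv X ω)⁻¹ • prodM X (fun i => i.val ≤ α.val)
      (marg X (fun i => i.val ≤ α.val) ω) (marg X (fun i => ¬ i.val ≤ α.val) ω) := by
  rw [R, if_neg h]

lemma Pos_prodM (q : Fin (n + 1) → Prop) [DecidablePred q]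
    {F : (∀ i : {i // q i}, X i.1) → ℝ} {G : (∀ i : {i // ¬ q i}, X i.1) → ℝ}
    (hF : ∀ u, 0 ≤ F u) (hG : ∀ v, 0 ≤ G v) : Pos X (prodM X q F G) :=
  fun x => mul_nonneg (hF _) (hG _)

lemma Pos_smul {c : ℝ} (hc : 0 ≤ c) {ω : Meas X} (h : Pos X ω) : Pos X (c • ω) :=
  fun x => mul_nonneg hc (h x)

lemma Pos_R (α : Fin n) {ω : Meas X} (h : Pos X ω) : Pos X (R X α ω) := by
  by_cases hω : ω = 0
  · rw [hω, R_zero]; intro x; simp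
  · rw [R_apply_ne_zero X α ω hω]
    exact Pos_smul X (inv_nonneg.2 (Finset.sum_nonneg fun x _ => abs_nonneg _))
      (Pos_prodM X _ (marg_nonneg X _ h) (marg_nonneg X _ h))

lemma mass_R (α : Fin n) {ω : Meas X} (h : Pos X ω) : mass X (R X α ω) = mass X ω := by
  by_cases hω : ω = 0
  · rw [hω, R_zero, mass_zero]
  · rw [R_apply_ne_zero X α ω hω, mass_smul, mass_prodM, sum_marg, sum_marg,
      tv_eq_mass X h]
    have hm := mass_pos_of_ne_zero X h hω
    field_simp

/-! ### key marginal computations -/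

lemma sum_ite_marg (p : Fin (n + 1) → Prop) [DecidablePred p]
    (C : (∀ i : {i // p i}, X i.1) → Prop) [DecidablePred C] (ω : Meas X) :
    ∑ u, (if C u then marg X p ω u else 0)
      = ∑ x, (if C (fun i => x i.1) then ω x else 0) := by
  have := sum_mul_marg X p (fun u => if C u then (1:ℝ) else 0) ω
  simpa only [ite_mul, one_mul, zero_mul] using this

/-- `R β` preserves the leading marginal at `α` whenever `α ≤ β`. -/
lemma marg_le_R_of_ge (α β : Fin n) (hαβ : α.val ≤ β.val) {ν : Meas X} (h : Pos X ν) :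
    marg X (fun i => i.val ≤ α.val) (R X β ν) = marg X (fun i => i.val ≤ α.val) ν := by
  by_cases hν : ν = 0
  · rw [hν, R_zero]
  · have hm := mass_pos_of_ne_zero X h hν
    rw [R_apply_ne_zero X β ν hν, marg_smul]
    funext y
    rw [Pi.smul_apply, smul_eq_mul, marg_prodM]
    have h2 : (∑ v : ∀ i : {i : Fin (n+1) // ¬ i.val ≤ β.val}, X i.1,
        if (∀ i : {i : Fin (n+1) // ¬ i.val ≤ β.val}, ∀ hp : i.1.val ≤ α.val, v i = y ⟨i.1, hp⟩)
          then marg X (fun i => ¬ i.val ≤ β.val) ν v else 0)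
        = mass X ν := by
      rw [Finset.sum_congr rfl (fun v _ => if_pos (fun i hi => absurd (le_trans hi hαβ) i.2)),
        sum_marg]
    -- the first factor is the marginal itself
    have h1 : (∑ u : ∀ i : {i : Fin (n+1) // i.val ≤ β.val}, X i.1,
        if (∀ i : {i : Fin (n+1) // i.val ≤ β.val}, ∀ h : i.1.val ≤ α.val, u i = y ⟨i.1, h⟩)
          then marg X (fun i => i.val ≤ β.val) ν u else 0)
        = marg X (fun i => i.val ≤ α.val) ν y := by
      rw [sum_ite_marg]
      unfold marg
      refine Finset.sum_congr rfl fun x _ => if_congr ?_ rfl rfl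
      constructor
      · intro H i; exact H ⟨i.1, le_trans i.2 hαβ⟩ i.2
      · intro H i hi; exact H ⟨i.1, hi⟩
    rw [h1, h2, tv_eq_mass X h]
    field_simp

/-- `R β` preserves the trailing marginal at `α` whenever `β ≤ α`. -/
lemma marg_gt_R_of_le (α β : Fin n) (hβα : β.val ≤ α.val) {ν : Meas X} (h : Pos X ν) :
    marg X (fun i => ¬ i.val ≤ α.val) (R X β ν) = marg X (fun i => ¬ i.val ≤ α.val) ν := by
  by_cases hν : ν = 0
  · rw [hν, R_zero]
  · have hm := mass_pos_of_ne_zero X h hν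
    rw [R_apply_ne_zero X β ν hν, marg_smul]
    funext y
    rw [Pi.smul_apply, smul_eq_mul, marg_prodM]
    have h1 : (∑ u : ∀ i : {i : Fin (n+1) // i.val ≤ β.val}, X i.1,
        if (∀ i : {i : Fin (n+1) // i.val ≤ β.val}, ∀ hp : ¬ i.1.val ≤ α.val, u i = y ⟨i.1, hp⟩)
          then marg X (fun i => i.val ≤ β.val) ν u else 0)
        = mass X ν := by
      rw [Finset.sum_congr rfl (fun u _ => if_pos (fun i hi => absurd (le_trans i.2 hβα) hi)),
        sum_marg]
    have h2 : (∑ v : ∀ i : {i : Fin (n+1) // ¬ i.val ≤ β.val}, X i.1,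
        if (∀ i : {i : Fin (n+1) // ¬ i.val ≤ β.val}, ∀ h : ¬ i.1.val ≤ α.val, v i = y ⟨i.1, h⟩)
          then marg X (fun i => ¬ i.val ≤ β.val) ν v else 0)
        = marg X (fun i => ¬ i.val ≤ α.val) ν y := by
      rw [sum_ite_marg]
      unfold marg
      refine Finset.sum_congr rfl fun x _ => if_congr ?_ rfl rfl
      constructor
      · intro H i; exact H ⟨i.1, fun hc => i.2 (le_trans hc hβα)⟩ i.2
      · intro H i hi; exact H ⟨i.1, hi⟩
    rw [h1, h2, tv_eq_mass X h]
    field_simp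

/-- Explicit formula for the leading marginal of `R β ν` when `β ≤ α`:
it only depends on the leading marginal of `ν` and its mass. -/
lemma marg_le_R_of_le (α β : Fin n) (hβα : β.val ≤ α.val) {ν : Meas X} (h : Pos X ν)
    (hν : ν ≠ 0) :
    marg X (fun i => i.val ≤ α.val) (R X β ν) = fun y => (mass X ν)⁻¹ *
      ((∑ w : ∀ i : {i : Fin (n+1) // i.val ≤ α.val}, X i.1,
          if (∀ i : {i : Fin (n+1) // i.val ≤ α.val}, i.1.val ≤ β.val → w i = y i)
            then marg X (fun i => i.val ≤ α.val) ν w else 0) *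
       (∑ w : ∀ i : {i : Fin (n+1) // i.val ≤ α.val}, X i.1,
          if (∀ i : {i : Fin (n+1) // i.val ≤ α.val}, ¬ i.1.val ≤ β.val → w i = y i)
            then marg X (fun i => i.val ≤ α.val) ν w else 0)) := by
  have hm := mass_pos_of_ne_zero X h hν
  rw [R_apply_ne_zero X β ν hν, marg_smul]
  funext y
  rw [Pi.smul_apply, smul_eq_mul, marg_prodM, tv_eq_mass X h]
  congr 1
  congr 1
  · rw [sum_ite_marg, sum_ite_marg]
    refine Finset.sum_congr rfl fun x _ => if_congr ?_ rfl rfl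
    constructor
    · intro H i hi; exact H ⟨i.1, hi⟩ i.2
    · intro H i hi; exact H ⟨i.1, le_trans i.2 hβα⟩ i.2
  · rw [sum_ite_marg, sum_ite_marg]
    refine Finset.sum_congr rfl fun x _ => if_congr ?_ rfl rfl
    constructor
    · intro H i hi; exact H ⟨i.1, hi⟩ i.2
    · intro H i hi; exact H ⟨i.1, hi⟩ i.2
/-- The leading marginal of `R β ν` (for `β ≤ α`) depends only on the leading
marginal of `ν` and its mass. -/
lemma marg_le_R_congr (α β : Fin n) (hβα : β.val ≤ α.val) {ν ν' : Meas X}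
    (h : Pos X ν) (h' : Pos X ν') (hmass : mass X ν = mass X ν')
    (hmarg : marg X (fun i => i.val ≤ α.val) ν = marg X (fun i => i.val ≤ α.val) ν') :
    marg X (fun i => i.val ≤ α.val) (R X β ν)
      = marg X (fun i => i.val ≤ α.val) (R X β ν') := by
  by_cases hν : ν = 0
  · have : ν' = 0 := by
      refine eq_zero_of_mass_eq_zero X h' ?_
      rw [← hmass, hν, mass_zero]
    rw [hν, this]
  · have hν' : ν' ≠ 0 := by
      refine ne_zero_of_mass_pos X ?_
      rw [← hmass]
      exact mass_pos_of_ne_zero X h hν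
    rw [marg_le_R_of_le X α β hβα h hν, marg_le_R_of_le X α β hβα h' hν', hmass, hmarg]

/-- Reconstruction: a positive nonzero product measure is the normalized product of
its marginals. -/
lemma prodM_reconstruct (α : Fin n) {ω : Meas X} (hpos : Pos X ω) (hω : ω ≠ 0)
    (hform : ∃ F G, ω = prodM X (fun i => i.val ≤ α.val) F G) :
    ω = (mass X ω)⁻¹ • prodM X (fun i => i.val ≤ α.val)
      (marg X (fun i => i.val ≤ α.val) ω) (marg X (fun i => ¬ i.val ≤ α.val) ω) := by
  have hm := mass_pos_of_ne_zero X hpos hω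
  obtain ⟨F, G, rfl⟩ := hform
  rw [marg_prodM_self, marg_prodM_compl]
  have hFG : (∑ u, F u) * (∑ v, G v) ≠ 0 := by
    rw [← mass_prodM]; exact ne_of_gt hm
  funext x
  rw [mass_prodM]
  show prodM X _ F G x = ((∑ u, F u) * (∑ v, G v))⁻¹ *
    ((F (fun i => x i.1) * ∑ v, G v) * ((∑ u, F u) * G (fun i => x i.1)))
  unfold prodM
  field_simp
  have hF := left_ne_zero_of_mul hFG
  have hG := right_ne_zero_of_mul hFG
  field_simp

/-- `R β` (for `β ≤ α`) preserves the property of being a product across link `α`. -/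
lemma R_preserves_form (α β : Fin n) (hβα : β.val ≤ α.val) (ω : Meas X)
    (hform : ∃ F G, ω = prodM X (fun i => i.val ≤ α.val) F G) :
    ∃ F' G', R X β ω = prodM X (fun i => i.val ≤ α.val) F' G' := by
  by_cases hω : ω = 0
  · exact ⟨0, 0, by rw [hω, R_zero]; funext x; simp [prodM]⟩
  obtain ⟨F, G, hw⟩ := hform
  refine ⟨fun w => (tv X ω)⁻¹ *
      (((∑ u' : ∀ i : {i : Fin (n+1) // i.val ≤ α.val}, X i.1,
          if (∀ i : {i : Fin (n+1) // i.val ≤ α.val}, i.1.val ≤ β.val → u' i = w i)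
            then F u' else 0) * (∑ v, G v)) *
       (∑ u' : ∀ i : {i : Fin (n+1) // i.val ≤ α.val}, X i.1,
          if (∀ i : {i : Fin (n+1) // i.val ≤ α.val}, ¬ i.1.val ≤ β.val → u' i = w i)
            then F u' else 0)), G, ?_⟩
  rw [R_apply_ne_zero X β ω hω]
  funext x
  have e1 : marg X (fun i => i.val ≤ β.val) ω (fun i => x i.1) =
      (∑ u' : ∀ i : {i : Fin (n+1) // i.val ≤ α.val}, X i.1,
        if (∀ i : {i : Fin (n+1) // i.val ≤ α.val}, i.1.val ≤ β.val → u' i = x i.1)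
          then F u' else 0) * (∑ v, G v) := by
    rw [hw, marg_prodM]
    refine congrArg₂ (· * ·) ?_ ?_
    · refine Finset.sum_congr rfl fun u' _ => if_congr ?_ rfl rfl
      constructor <;> (intro H i hi; exact H i hi)
    · exact Finset.sum_congr rfl fun v _ =>
        if_pos (fun i hi => absurd (le_trans hi hβα) i.2)
  have e2 : marg X (fun i => ¬ i.val ≤ β.val) ω (fun i => x i.1) =
      (∑ u' : ∀ i : {i : Fin (n+1) // i.val ≤ α.val}, X i.1,
        if (∀ i : {i : Fin (n+1) // i.val ≤ α.val}, ¬ i.1.val ≤ β.val → u' i = x i.1)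
          then F u' else 0) * G (fun i : {i : Fin (n+1) // ¬ i.val ≤ α.val} => x i.1) := by
    rw [hw, marg_prodM]
    refine congrArg₂ (· * ·) ?_ ?_
    · refine Finset.sum_congr rfl fun u' _ => if_congr ?_ rfl rfl
      constructor <;> (intro H i hi; exact H i hi)
    · refine sum_ite_eq_pi _ (fun i : {i : Fin (n+1) // ¬ i.val ≤ α.val} => x i.1) G _
        (fun v => ?_)
      constructor
      · intro H; funext i; exact H i (fun hc => i.2 (le_trans hc hβα))
      · intro H i hi; rw [H]
  show (tv X ω)⁻¹ * (marg X (fun i => i.val ≤ β.val) ω (fun i => x i.1) *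
      marg X (fun i => ¬ i.val ≤ β.val) ω (fun i => x i.1)) =
    ((tv X ω)⁻¹ *
      (((∑ u' : ∀ i : {i : Fin (n+1) // i.val ≤ α.val}, X i.1,
          if (∀ i : {i : Fin (n+1) // i.val ≤ α.val}, i.1.val ≤ β.val → u' i = x i.1)
            then F u' else 0) * (∑ v, G v)) *
       (∑ u' : ∀ i : {i : Fin (n+1) // i.val ≤ α.val}, X i.1,
          if (∀ i : {i : Fin (n+1) // i.val ≤ α.val}, ¬ i.1.val ≤ β.val → u' i = x i.1)
            then F u' else 0))) * G (fun i : {i : Fin (n+1) // ¬ i.val ≤ α.val} => x i.1)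
  rw [e1, e2]
  ring
/-! ### lists of recombinators -/

noncomputable def applyL (l : List (Fin n)) (ω : Meas X) : Meas X :=
  l.foldr (fun β ν => R X β ν) ω

lemma applyL_nil (ω : Meas X) : applyL X [] ω = ω := rfl

lemma applyL_cons (β : Fin n) (l : List (Fin n)) (ω : Meas X) :
    applyL X (β :: l) ω = R X β (applyL X l ω) := rfl

lemma applyL_append (l₁ l₂ : List (Fin n)) (ω : Meas X) :
    applyL X (l₁ ++ l₂) ω = applyL X l₁ (applyL X l₂ ω) :=
  List.foldr_append

lemma RG_eq_applyL (G : Finset (Fin n)) (ω : Meas X) :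
    RG X G ω = applyL X (G.sort (· ≤ ·)) ω := rfl

lemma Pos_applyL (l : List (Fin n)) {ω : Meas X} (h : Pos X ω) : Pos X (applyL X l ω) := by
  induction l with
  | nil => exact h
  | cons β l ih => exact Pos_R X β ih

lemma mass_applyL (l : List (Fin n)) {ω : Meas X} (h : Pos X ω) :
    mass X (applyL X l ω) = mass X ω := by
  induction l with
  | nil => rfl
  | cons β l ih => rw [applyL_cons, mass_R X β (Pos_applyL X l h), ih]

lemma Pos_RG (G : Finset (Fin n)) {ω : Meas X} (h : Pos X ω) : Pos X (RG X G ω) :=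
  Pos_applyL X _ h

lemma mass_RG (G : Finset (Fin n)) {ω : Meas X} (h : Pos X ω) :
    mass X (RG X G ω) = mass X ω :=
  mass_applyL X _ h

/-! ### chain lemmas -/

lemma marg_le_applyL_of_ge (α : Fin n) (l : List (Fin n)) (hl : ∀ β ∈ l, α.val ≤ β.val)
    {ν : Meas X} (h : Pos X ν) :
    marg X (fun i => i.val ≤ α.val) (applyL X l ν) = marg X (fun i => i.val ≤ α.val) ν := by
  induction l with
  | nil => rfl
  | cons β l ih =>
      rw [applyL_cons, marg_le_R_of_ge X α β (hl β (List.mem_cons_self))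
        (Pos_applyL X l h), ih (fun β hβ => hl β (List.mem_cons_of_mem _ hβ))]

lemma marg_gt_applyL_of_le (α : Fin n) (l : List (Fin n)) (hl : ∀ β ∈ l, β.val ≤ α.val)
    {ν : Meas X} (h : Pos X ν) :
    marg X (fun i => ¬ i.val ≤ α.val) (applyL X l ν)
      = marg X (fun i => ¬ i.val ≤ α.val) ν := by
  induction l with
  | nil => rfl
  | cons β l ih =>
      rw [applyL_cons, marg_gt_R_of_le X α β (hl β (List.mem_cons_self))
        (Pos_applyL X l h), ih (fun β hβ => hl β (List.mem_cons_of_mem _ hβ))]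

lemma marg_le_applyL_congr (α : Fin n) (l : List (Fin n)) (hl : ∀ β ∈ l, β.val ≤ α.val)
    {ν ν' : Meas X} (h : Pos X ν) (h' : Pos X ν') (hmass : mass X ν = mass X ν')
    (hmarg : marg X (fun i => i.val ≤ α.val) ν = marg X (fun i => i.val ≤ α.val) ν') :
    marg X (fun i => i.val ≤ α.val) (applyL X l ν)
      = marg X (fun i => i.val ≤ α.val) (applyL X l ν') := by
  induction l with
  | nil => exact hmarg
  | cons β l ih =>
      rw [applyL_cons, applyL_cons]
      refine marg_le_R_congr X α β (hl β (List.mem_cons_self)) (Pos_applyL X l h)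
        (Pos_applyL X l h') ?_ (ih (fun β hβ => hl β (List.mem_cons_of_mem _ hβ)))
      rw [mass_applyL X l h, mass_applyL X l h', hmass]

lemma applyL_form (α : Fin n) (l : List (Fin n)) (hl : ∀ β ∈ l, β.val ≤ α.val)
    {ω : Meas X} (hform : ∃ F G, ω = prodM X (fun i => i.val ≤ α.val) F G) :
    ∃ F G, applyL X l ω = prodM X (fun i => i.val ≤ α.val) F G := by
  induction l with
  | nil => exact hform
  | cons β l ih =>
      rw [applyL_cons]
      exact R_preserves_form X α β (hl β (List.mem_cons_self))
        _ (ih (fun β hβ => hl β (List.mem_cons_of_mem _ hβ)))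

/-! ### sorting lemmas -/

lemma sort_cons_of_min (G : Finset (Fin n)) (a : Fin n) (ha : a ∈ G)
    (hmin : ∀ b ∈ G, a ≤ b) :
    G.sort (· ≤ ·) = a :: (G.erase a).sort (· ≤ ·) := by
  conv_lhs => rw [← Finset.insert_erase ha]
  exact Finset.sort_insert _ (fun b hb => hmin b (Finset.mem_of_mem_erase hb))
    (Finset.notMem_erase a G)

lemma sort_append_max (G : Finset (Fin n)) (a : Fin n) (ha : a ∈ G)
    (hmax : ∀ b ∈ G, b ≤ a) :
    G.sort (· ≤ ·) = (G.erase a).sort (· ≤ ·) ++ [a] := by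
  refine List.Perm.eq_of_pairwise' (Finset.pairwise_sort _ _) ?_ ?_
  swap
  · rw [← Multiset.coe_eq_coe]
    show (G.sort (· ≤ ·) : Multiset (Fin n)) = ((G.erase a).sort (· ≤ ·) ++ [a] : List (Fin n))
    rw [← Multiset.coe_add, Finset.sort_eq, Finset.sort_eq, Multiset.coe_singleton,
      Finset.erase_val, add_comm, Multiset.singleton_add, Multiset.cons_erase
        (Finset.mem_def.1 ha)]
  · refine List.pairwise_append.2 ⟨Finset.pairwise_sort _ _, List.pairwise_singleton _ _,
      fun x hx y hy => ?_⟩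
    rw [List.mem_singleton] at hy
    subst hy
    exact hmax x (Finset.mem_of_mem_erase ((Finset.mem_sort _).1 hx))

/-! ### decomposition of `RG` into low and high parts -/

lemma RG_decomp (α : Fin n) (G : Finset (Fin n)) (ω : Meas X) :
    RG X G ω = applyL X ((G.filter (fun β => β.val ≤ α.val)).sort (· ≤ ·))
      (applyL X ((G.filter (fun β => ¬ β.val ≤ α.val)).sort (· ≤ ·)) ω) := by
  induction G using Finset.strongInduction with
  | _ G ih =>
    rcases G.eq_empty_or_nonempty with rfl | hne
    · simp [RG_eq_applyL, applyL_nil]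
    · set a := G.min' hne with hadef
      have haG : a ∈ G := G.min'_mem hne
      have hmin : ∀ b ∈ G, a ≤ b := fun b hb => G.min'_le b hb
      have hG : G.sort (· ≤ ·) = a :: (G.erase a).sort (· ≤ ·) :=
        sort_cons_of_min G a haG hmin
      by_cases hqa : a.val ≤ α.val
      · have h1 : G.filter (fun β => β.val ≤ α.val)
            = insert a ((G.erase a).filter (fun β => β.val ≤ α.val)) := by
          rw [Finset.filter_erase, Finset.insert_erase]
          exact Finset.mem_filter.2 ⟨haG, hqa⟩
        have h2 : G.filter (fun β => ¬ β.val ≤ α.val)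
            = (G.erase a).filter (fun β => ¬ β.val ≤ α.val) := by
          rw [Finset.filter_erase, Finset.erase_eq_of_notMem]
          intro hmem
          exact (Finset.mem_filter.1 hmem).2 hqa
        have h3 : ((G.filter (fun β => β.val ≤ α.val)).sort (· ≤ ·))
            = a :: (((G.erase a).filter (fun β => β.val ≤ α.val)).sort (· ≤ ·)) := by
          rw [h1]
          refine Finset.sort_insert _ (fun b hb => hmin b ?_) ?_
          · exact Finset.mem_of_mem_erase (Finset.mem_of_mem_filter b hb)
          · intro hmem
            exact Finset.notMem_erase a G (Finset.mem_of_mem_filter a hmem)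
        rw [RG_eq_applyL, hG, applyL_cons, h3, applyL_cons, h2, ← RG_eq_applyL,
          ih (G.erase a) (Finset.erase_ssubset haG)]
      · have h1 : G.filter (fun β => β.val ≤ α.val) = ∅ := by
          refine Finset.filter_eq_empty_iff.2 (fun b hb => ?_)
          intro hqb
          exact hqa (le_trans (hmin b hb) hqb)
        have h2 : G.filter (fun β => ¬ β.val ≤ α.val) = G :=
          Finset.filter_eq_self.2 (fun b hb hqb => hqa (le_trans (hmin b hb) hqb))
        rw [h1, h2, Finset.sort_empty, applyL_nil, RG_eq_applyL]
/-! ### marginals of composite recombinators -/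

lemma smul_prodM (p : Fin (n + 1) → Prop) [DecidablePred p] (c : ℝ)
    (F : (∀ i : {i // p i}, X i.1) → ℝ) (G : (∀ i : {i // ¬ p i}, X i.1) → ℝ) :
    c • prodM X p F G = prodM X p (c • F) G := by
  funext x
  show c * (F _ * G _) = (c • F) _ * G _
  simp [mul_assoc]

lemma marg_le_RG_filter (α : Fin n) (G : Finset (Fin n)) {ω₀ : Meas X} (h : Pos X ω₀) :
    marg X (fun i => i.val ≤ α.val) (RG X G ω₀)
      = marg X (fun i => i.val ≤ α.val) (RG X (G.filter (fun β => β.val ≤ α.val)) ω₀) := by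
  rw [RG_decomp X α G ω₀, RG_eq_applyL]
  refine marg_le_applyL_congr X α _ ?_ (Pos_applyL X _ h) h ?_ ?_
  · intro β hβ
    exact (Finset.mem_filter.1 ((Finset.mem_sort _).1 hβ)).2
  · exact mass_applyL X _ h
  · refine marg_le_applyL_of_ge X α _ ?_ h
    intro β hβ
    have := (Finset.mem_filter.1 ((Finset.mem_sort _).1 hβ)).2
    omega

lemma marg_gt_RG_filter (α : Fin n) (G : Finset (Fin n)) {ω₀ : Meas X} (h : Pos X ω₀) :
    marg X (fun i => ¬ i.val ≤ α.val) (RG X G ω₀)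
      = marg X (fun i => ¬ i.val ≤ α.val) (RG X (G.filter (fun β => ¬ β.val ≤ α.val)) ω₀) := by
  rw [RG_decomp X α G ω₀, RG_eq_applyL]
  refine marg_gt_applyL_of_le X α _ ?_ (Pos_applyL X _ h)
  intro β hβ
  exact (Finset.mem_filter.1 ((Finset.mem_sort _).1 hβ)).2

lemma marg_le_RG_insert (α : Fin n) (G : Finset (Fin n)) {ω₀ : Meas X} (h : Pos X ω₀) :
    marg X (fun i => i.val ≤ α.val) (RG X (insert α G) ω₀)
      = marg X (fun i => i.val ≤ α.val) (RG X G ω₀) := by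
  by_cases hαG : α ∈ G
  · rw [Finset.insert_eq_of_mem hαG]
  rw [marg_le_RG_filter X α (insert α G) h, marg_le_RG_filter X α G h]
  have hfil : (insert α G).filter (fun β => β.val ≤ α.val)
      = insert α (G.filter (fun β => β.val ≤ α.val)) := by
    rw [Finset.filter_insert, if_pos (le_refl α.val)]
  set K := insert α (G.filter (fun β => β.val ≤ α.val)) with hK
  have hαK : α ∈ K := Finset.mem_insert_self α _
  have hmax : ∀ b ∈ K, b ≤ α := by
    intro b hb
    rcases Finset.mem_insert.1 hb with rfl | hb
    · exact le_refl b
    · exact (Finset.mem_filter.1 hb).2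
  have hKe : K.erase α = G.filter (fun β => β.val ≤ α.val) := by
    rw [hK, Finset.erase_insert]
    intro hmem
    exact hαG (Finset.mem_of_mem_filter α hmem)
  rw [hfil, RG_eq_applyL, sort_append_max K α hαK hmax, applyL_append, hKe]
  have : applyL X [α] ω₀ = R X α ω₀ := rfl
  rw [this, RG_eq_applyL]
  refine marg_le_applyL_congr X α _ ?_ (Pos_R X α h) h ?_ ?_
  · intro β hβ
    exact (Finset.mem_filter.1 ((Finset.mem_sort _).1 hβ)).2
  · exact mass_R X α h
  · exact marg_le_R_of_ge X α α (le_refl _) h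

lemma marg_gt_RG_insert (α : Fin n) (G : Finset (Fin n)) {ω₀ : Meas X} (h : Pos X ω₀) :
    marg X (fun i => ¬ i.val ≤ α.val) (RG X (insert α G) ω₀)
      = marg X (fun i => ¬ i.val ≤ α.val) (RG X G ω₀) := by
  rw [marg_gt_RG_filter X α (insert α G) h, marg_gt_RG_filter X α G h]
  have hfil : (insert α G).filter (fun β => ¬ β.val ≤ α.val)
      = G.filter (fun β => ¬ β.val ≤ α.val) := by
    rw [Finset.filter_insert, if_neg (fun hc => hc (le_refl α.val))]
  rw [hfil]

lemma RG_insert_form (α : Fin n) (G : Finset (Fin n)) {ω₀ : Meas X} (h : Pos X ω₀) :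
    ∃ F G', RG X (insert α G) ω₀ = prodM X (fun i => i.val ≤ α.val) F G' := by
  rw [RG_decomp X α (insert α G) ω₀]
  have hfil : (insert α G).filter (fun β => β.val ≤ α.val)
      = insert α (G.filter (fun β => β.val ≤ α.val)) := by
    rw [Finset.filter_insert, if_pos (le_refl α.val)]
  set K := insert α (G.filter (fun β => β.val ≤ α.val)) with hK
  have hαK : α ∈ K := Finset.mem_insert_self α _
  have hmax : ∀ b ∈ K, b ≤ α := by
    intro b hb
    rcases Finset.mem_insert.1 hb with rfl | hb
    · exact le_refl b
    · exact (Finset.mem_filter.1 hb).2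
  rw [hfil, sort_append_max K α hαK hmax, applyL_append]
  set ν := applyL X ((insert α G).filter (fun β => ¬ β.val ≤ α.val) |>.sort (· ≤ ·)) ω₀
  have hRν : ∃ F G', applyL X [α] ν = prodM X (fun i => i.val ≤ α.val) F G' := by
    have : applyL X [α] ν = R X α ν := rfl
    rw [this]
    by_cases hν : ν = 0
    · exact ⟨0, 0, by rw [hν, R_zero]; funext x; simp [prodM]⟩
    · rw [R_apply_ne_zero X α ν hν, smul_prodM]
      exact ⟨_, _, rfl⟩
  refine applyL_form X α _ ?_ hRν
  intro β hβ
  have hm : β ∈ K.erase α := (Finset.mem_sort _).1 hβ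
  have : β ≤ α := hmax β (Finset.mem_of_mem_erase hm)
  exact this

/-- `RG (insert α G) ω₀` is the normalised product of the marginals of `RG G ω₀`. -/
lemma RG_insert_eq_prod (α : Fin n) (G : Finset (Fin n)) {ω₀ : Meas X} (h : Pos X ω₀)
    (hω₀ : ω₀ ≠ 0) :
    RG X (insert α G) ω₀ = (mass X ω₀)⁻¹ • prodM X (fun i => i.val ≤ α.val)
      (marg X (fun i => i.val ≤ α.val) (RG X G ω₀))
      (marg X (fun i => ¬ i.val ≤ α.val) (RG X G ω₀)) := by
  have hpos := Pos_RG X (insert α G) h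
  have hmass : mass X (RG X (insert α G) ω₀) = mass X ω₀ := mass_RG X _ h
  have hne : RG X (insert α G) ω₀ ≠ 0 := by
    refine ne_zero_of_mass_pos X ?_
    rw [hmass]
    exact mass_pos_of_ne_zero X h hω₀
  have := prodM_reconstruct X α hpos hne (RG_insert_form X α G h)
  rw [this, hmass, marg_le_RG_insert X α G h, marg_gt_RG_insert X α G h]
/-! ### the coefficients -/

lemma union_filter_eq_left (q : Fin n → Prop) [DecidablePred q] (S T : Finset (Fin n))
    (hS : ∀ x ∈ S, q x) (hT : ∀ x ∈ T, ¬ q x) : (S ∪ T).filter q = S := by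
  ext x
  simp only [Finset.mem_filter, Finset.mem_union]
  constructor
  · rintro ⟨h1 | h1, h2⟩
    · exact h1
    · exact absurd h2 (hT x h1)
  · intro hx
    exact ⟨Or.inl hx, hS x hx⟩

lemma union_filter_eq_right (q : Fin n → Prop) [DecidablePred q] (S T : Finset (Fin n))
    (hS : ∀ x ∈ S, q x) (hT : ∀ x ∈ T, ¬ q x) :
    (S ∪ T).filter (fun x => ¬ q x) = T := by
  ext x
  simp only [Finset.mem_filter, Finset.mem_union]
  constructor
  · rintro ⟨h1 | h1, h2⟩
    · exact absurd (hS x h1) h2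
    · exact h1
  · intro hx
    exact ⟨Or.inr hx, hT x hx⟩

lemma sum_powerset_pair {M : Type*} [AddCommMonoid M] (q : Fin n → Prop) [DecidablePred q]
    (f : Finset (Fin n) → M) :
    ∑ G ∈ (Finset.univ : Finset (Fin n)).powerset, f G
      = ∑ S ∈ ((Finset.univ : Finset (Fin n)).filter q).powerset,
          ∑ T ∈ ((Finset.univ : Finset (Fin n)).filter (fun β => ¬ q β)).powerset,
            f (S ∪ T) := by
  rw [← Finset.sum_product']
  refine Finset.sum_nbij' (fun G => (G.filter q, G.filter (fun β => ¬ q β)))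
    (fun P => P.1 ∪ P.2) ?_ ?_ ?_ ?_ ?_
  · intro G _
    rw [Finset.mem_product]
    constructor <;>
      · rw [Finset.mem_powerset]
        exact Finset.filter_subset_filter _ (Finset.subset_univ G)
  · intro P _
    rw [Finset.mem_powerset]
    exact Finset.subset_univ _
  · intro G _
    exact Finset.filter_union_filter_not_eq _ G
  · intro P hP
    rw [Finset.mem_product, Finset.mem_powerset, Finset.mem_powerset] at hP
    have hS : ∀ x ∈ P.1, q x := fun x hx => (Finset.mem_filter.1 (hP.1 hx)).2
    have hT : ∀ x ∈ P.2, ¬ q x := fun x hx => (Finset.mem_filter.1 (hP.2 hx)).2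
    have := union_filter_eq_left q P.1 P.2 hS hT
    have := union_filter_eq_right q P.1 P.2 hS hT
    ext <;> simp_all
  · intro G _
    rw [Finset.filter_union_filter_not_eq _ G]

lemma coeffA_union (ρ : Fin n → ℝ) (t : ℝ) (q : Fin n → Prop) [DecidablePred q]
    (S T : Finset (Fin n)) (hS : ∀ x ∈ S, q x) (hT : ∀ x ∈ T, ¬ q x) :
    coeffA ρ (S ∪ T) t =
      ((∏ β ∈ (Finset.univ.filter q) \ S, Real.exp (-(ρ β * t))) *
        ∏ β ∈ S, (1 - Real.exp (-(ρ β * t)))) *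
      ((∏ β ∈ (Finset.univ.filter (fun β => ¬ q β)) \ T, Real.exp (-(ρ β * t))) *
        ∏ β ∈ T, (1 - Real.exp (-(ρ β * t)))) := by
  have h1 : (S ∪ T)ᶜ = ((Finset.univ.filter q) \ S) ∪
      ((Finset.univ.filter (fun β => ¬ q β)) \ T) := by
    ext β
    simp only [Finset.mem_compl, Finset.mem_union, Finset.mem_sdiff, Finset.mem_filter,
      Finset.mem_univ, true_and]
    by_cases hq : q β
    · have : β ∉ T := fun hc => hT β hc hq
      tauto
    · have : β ∉ S := fun hc => hq (hS β hc)
      tauto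
  have h2 : Disjoint ((Finset.univ.filter q) \ S)
      ((Finset.univ.filter (fun β => ¬ q β)) \ T) := by
    rw [Finset.disjoint_left]
    intro a ha hb
    exact (Finset.mem_filter.1 (Finset.mem_sdiff.1 hb).1).2
      (Finset.mem_filter.1 (Finset.mem_sdiff.1 ha).1).2
  have h3 : Disjoint S T := by
    rw [Finset.disjoint_left]
    intro a ha hb
    exact hT a hb (hS a ha)
  rw [coeffA, h1, Finset.prod_union h2, Finset.prod_union h3]
  ring

lemma sum_powerset_prod (L : Finset (Fin n)) (e f : Fin n → ℝ) :
    ∑ S ∈ L.powerset, (∏ β ∈ L \ S, e β) * ∏ β ∈ S, f β = ∏ β ∈ L, (e β + f β) := by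
  calc ∑ S ∈ L.powerset, (∏ β ∈ L \ S, e β) * ∏ β ∈ S, f β
      = ∑ S ∈ L.powerset, (∏ β ∈ S, f β) * ∏ β ∈ L \ S, e β :=
        Finset.sum_congr rfl fun S _ => mul_comm _ _
    _ = ∏ β ∈ L, (f β + e β) := (Finset.prod_add f e L).symm
    _ = ∏ β ∈ L, (e β + f β) := Finset.prod_congr rfl fun β _ => add_comm _ _

lemma sum_exp_split (ρ : Fin n → ℝ) (t : ℝ) (L : Finset (Fin n)) :
    ∑ S ∈ L.powerset, (∏ β ∈ L \ S, Real.exp (-(ρ β * t))) *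
      ∏ β ∈ S, (1 - Real.exp (-(ρ β * t))) = 1 := by
  rw [sum_powerset_prod]
  refine Finset.prod_eq_one fun β _ => by ring

lemma sum_coeffA (ρ : Fin n → ℝ) (t : ℝ) :
    ∑ G ∈ (Finset.univ : Finset (Fin n)).powerset, coeffA ρ G t = 1 := by
  have : ∀ G : Finset (Fin n), coeffA ρ G t =
      (∏ β ∈ Finset.univ \ G, Real.exp (-(ρ β * t))) *
        ∏ β ∈ G, (1 - Real.exp (-(ρ β * t))) := by
    intro G
    rw [coeffA, Finset.compl_eq_univ_sdiff]
  rw [Finset.sum_congr rfl fun G _ => this G, sum_exp_split]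

lemma coeffA_nonneg (ρ : Fin n → ℝ) (hρ : ∀ β, 0 < ρ β) (G : Finset (Fin n)) {t : ℝ}
    (ht : 0 ≤ t) : 0 ≤ coeffA ρ G t := by
  refine mul_nonneg (Finset.prod_nonneg fun β _ => (Real.exp_pos _).le)
    (Finset.prod_nonneg fun β _ => ?_)
  have : Real.exp (-(ρ β * t)) ≤ 1 := by
    rw [Real.exp_le_one_iff]
    have := (hρ β).le
    nlinarith
  linarith
/-! ### sums of measures -/

lemma Pos_sum {ι : Type*} (s : Finset ι) (f : ι → Meas X) (h : ∀ i ∈ s, Pos X (f i)) :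
    Pos X (∑ i ∈ s, f i) := by
  intro x
  rw [Finset.sum_apply]
  exact Finset.sum_nonneg fun i hi => h i hi x

lemma mass_sum {ι : Type*} (s : Finset ι) (f : ι → Meas X) :
    mass X (∑ i ∈ s, f i) = ∑ i ∈ s, mass X (f i) := by
  unfold mass
  simp only [Finset.sum_apply]
  rw [Finset.sum_comm]

lemma marg_sum {ι : Type*} (p : Fin (n + 1) → Prop) [DecidablePred p] (s : Finset ι)
    (f : ι → Meas X) :
    marg X p (∑ i ∈ s, f i) = ∑ i ∈ s, marg X p (f i) := by
  funext y
  rw [Finset.sum_apply]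
  unfold marg
  calc ∑ x, (if (∀ i : {i // p i}, x i.1 = y i) then (∑ i ∈ s, f i) x else 0)
      = ∑ x, ∑ i ∈ s, (if (∀ i : {i // p i}, x i.1 = y i) then f i x else 0) := by
        refine Finset.sum_congr rfl fun x _ => ?_
        rw [Finset.sum_apply]
        split <;> simp
    _ = ∑ i ∈ s, ∑ x, (if (∀ i : {i // p i}, x i.1 = y i) then f i x else 0) :=
        Finset.sum_comm

lemma Pos_sol (ρ : Fin n → ℝ) (hρ : ∀ β, 0 < ρ β) {ω₀ : Meas X} (h₀ : Pos X ω₀)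
    {t : ℝ} (ht : 0 ≤ t) : Pos X (sol X ρ ω₀ t) :=
  Pos_sum X _ _ fun G _ => Pos_smul X (coeffA_nonneg ρ hρ G ht) (Pos_RG X G h₀)

lemma mass_sol (ρ : Fin n → ℝ) {ω₀ : Meas X} (h₀ : Pos X ω₀) (t : ℝ) :
    mass X (sol X ρ ω₀ t) = mass X ω₀ := by
  rw [sol, mass_sum]
  calc ∑ G ∈ (Finset.univ : Finset (Fin n)).powerset, mass X (coeffA ρ G t • RG X G ω₀)
      = ∑ G ∈ (Finset.univ : Finset (Fin n)).powerset, coeffA ρ G t * mass X ω₀ := by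
        refine Finset.sum_congr rfl fun G _ => ?_
        rw [mass_smul, mass_RG X G h₀]
    _ = mass X ω₀ := by rw [← Finset.sum_mul, sum_coeffA, one_mul]

/-! ### bilinearity of prodM -/

lemma prodM_sum_sum {ι κ : Type*} (p : Fin (n + 1) → Prop) [DecidablePred p]
    (s : Finset ι) (u : Finset κ) (c : ι → ℝ) (d : κ → ℝ)
    (F : ι → (∀ i : {i // p i}, X i.1) → ℝ) (G : κ → (∀ i : {i // ¬ p i}, X i.1) → ℝ) :
    prodM X p (∑ i ∈ s, c i • F i) (∑ j ∈ u, d j • G j)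
      = ∑ i ∈ s, ∑ j ∈ u, (c i * d j) • prodM X p (F i) (G j) := by
  funext x
  show (∑ i ∈ s, c i • F i) _ * (∑ j ∈ u, d j • G j) _ = _
  rw [Finset.sum_apply, Finset.sum_apply, Finset.sum_mul_sum]
  rw [Finset.sum_apply]
  refine Finset.sum_congr rfl fun i _ => ?_
  rw [Finset.sum_apply]
  refine Finset.sum_congr rfl fun j _ => ?_
  show (c i • F i) _ * (d j • G j) _ = ((c i * d j) • prodM X p (F i) (G j)) x
  show (c i * F i _) * (d j * G j _) = (c i * d j) * (F i _ * G j _)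
  ring

/-! ### splitting the marginals of the solution -/

lemma marg_le_sol (α : Fin n) (ρ : Fin n → ℝ) (hρ : ∀ β, 0 < ρ β) {ω₀ : Meas X}
    (h₀ : Pos X ω₀) (t : ℝ) :
    marg X (fun i => i.val ≤ α.val) (sol X ρ ω₀ t)
      = ∑ S ∈ ((Finset.univ : Finset (Fin n)).filter (fun β => β.val ≤ α.val)).powerset,
          ((∏ β ∈ ((Finset.univ : Finset (Fin n)).filter (fun β => β.val ≤ α.val)) \ S,
              Real.exp (-(ρ β * t))) * ∏ β ∈ S, (1 - Real.exp (-(ρ β * t)))) •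
            marg X (fun i => i.val ≤ α.val) (RG X S ω₀) := by
  rw [sol, marg_sum]
  have step1 : ∀ G : Finset (Fin n), marg X (fun i => i.val ≤ α.val) (coeffA ρ G t • RG X G ω₀)
      = coeffA ρ G t • marg X (fun i => i.val ≤ α.val)
          (RG X (G.filter (fun β => β.val ≤ α.val)) ω₀) := by
    intro G
    rw [marg_smul, marg_le_RG_filter X α G h₀]
  rw [Finset.sum_congr rfl fun G _ => step1 G]
  rw [sum_powerset_pair (fun β : Fin n => β.val ≤ α.val)
    (fun G => coeffA ρ G t • marg X (fun i => i.val ≤ α.val)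
      (RG X (G.filter (fun β => β.val ≤ α.val)) ω₀))]
  refine Finset.sum_congr rfl fun S hS => ?_
  rw [Finset.mem_powerset] at hS
  have hSq : ∀ x ∈ S, x.val ≤ α.val := fun x hx => (Finset.mem_filter.1 (hS hx)).2
  calc ∑ T ∈ ((Finset.univ : Finset (Fin n)).filter (fun β => ¬ β.val ≤ α.val)).powerset,
        coeffA ρ (S ∪ T) t • marg X (fun i => i.val ≤ α.val)
          (RG X ((S ∪ T).filter (fun β => β.val ≤ α.val)) ω₀)
      = ∑ T ∈ ((Finset.univ : Finset (Fin n)).filter (fun β => ¬ β.val ≤ α.val)).powerset,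
        ((((∏ β ∈ ((Finset.univ : Finset (Fin n)).filter (fun β => β.val ≤ α.val)) \ S,
            Real.exp (-(ρ β * t))) * ∏ β ∈ S, (1 - Real.exp (-(ρ β * t)))) *
         ((∏ β ∈ ((Finset.univ : Finset (Fin n)).filter (fun β => ¬ β.val ≤ α.val)) \ T,
            Real.exp (-(ρ β * t))) * ∏ β ∈ T, (1 - Real.exp (-(ρ β * t))))) •
          marg X (fun i => i.val ≤ α.val) (RG X S ω₀)) := by
        refine Finset.sum_congr rfl fun T hT => ?_
        rw [Finset.mem_powerset] at hT
        have hTq : ∀ x ∈ T, ¬ x.val ≤ α.val := fun x hx => (Finset.mem_filter.1 (hT hx)).2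
        rw [coeffA_union ρ t (fun β => β.val ≤ α.val) S T hSq hTq,
          union_filter_eq_left (fun β => β.val ≤ α.val) S T hSq hTq]
    _ = ((∏ β ∈ ((Finset.univ : Finset (Fin n)).filter (fun β => β.val ≤ α.val)) \ S,
            Real.exp (-(ρ β * t))) * ∏ β ∈ S, (1 - Real.exp (-(ρ β * t)))) •
          marg X (fun i => i.val ≤ α.val) (RG X S ω₀) := by
        rw [← Finset.sum_smul]
        congr 1
        rw [← Finset.mul_sum, sum_exp_split, mul_one]

lemma marg_gt_sol (α : Fin n) (ρ : Fin n → ℝ) (hρ : ∀ β, 0 < ρ β) {ω₀ : Meas X}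
    (h₀ : Pos X ω₀) (t : ℝ) :
    marg X (fun i => ¬ i.val ≤ α.val) (sol X ρ ω₀ t)
      = ∑ T ∈ ((Finset.univ : Finset (Fin n)).filter (fun β => ¬ β.val ≤ α.val)).powerset,
          ((∏ β ∈ ((Finset.univ : Finset (Fin n)).filter (fun β => ¬ β.val ≤ α.val)) \ T,
              Real.exp (-(ρ β * t))) * ∏ β ∈ T, (1 - Real.exp (-(ρ β * t)))) •
            marg X (fun i => ¬ i.val ≤ α.val) (RG X T ω₀) := by
  rw [sol, marg_sum]
  have step1 : ∀ G : Finset (Fin n),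
      marg X (fun i => ¬ i.val ≤ α.val) (coeffA ρ G t • RG X G ω₀)
      = coeffA ρ G t • marg X (fun i => ¬ i.val ≤ α.val)
          (RG X (G.filter (fun β => ¬ β.val ≤ α.val)) ω₀) := by
    intro G
    rw [marg_smul, marg_gt_RG_filter X α G h₀]
  rw [Finset.sum_congr rfl fun G _ => step1 G]
  rw [sum_powerset_pair (fun β : Fin n => β.val ≤ α.val)
    (fun G => coeffA ρ G t • marg X (fun i => ¬ i.val ≤ α.val)
      (RG X (G.filter (fun β => ¬ β.val ≤ α.val)) ω₀))]
  rw [Finset.sum_comm]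
  refine Finset.sum_congr rfl fun T hT => ?_
  rw [Finset.mem_powerset] at hT
  have hTq : ∀ x ∈ T, ¬ x.val ≤ α.val := fun x hx => (Finset.mem_filter.1 (hT hx)).2
  calc ∑ S ∈ ((Finset.univ : Finset (Fin n)).filter (fun β => β.val ≤ α.val)).powerset,
        coeffA ρ (S ∪ T) t • marg X (fun i => ¬ i.val ≤ α.val)
          (RG X ((S ∪ T).filter (fun β => ¬ β.val ≤ α.val)) ω₀)
      = ∑ S ∈ ((Finset.univ : Finset (Fin n)).filter (fun β => β.val ≤ α.val)).powerset,
        ((((∏ β ∈ ((Finset.univ : Finset (Fin n)).filter (fun β => ¬ β.val ≤ α.val)) \ T,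
            Real.exp (-(ρ β * t))) * ∏ β ∈ T, (1 - Real.exp (-(ρ β * t)))) *
         ((∏ β ∈ ((Finset.univ : Finset (Fin n)).filter (fun β => β.val ≤ α.val)) \ S,
            Real.exp (-(ρ β * t))) * ∏ β ∈ S, (1 - Real.exp (-(ρ β * t))))) •
          marg X (fun i => ¬ i.val ≤ α.val) (RG X T ω₀)) := by
        refine Finset.sum_congr rfl fun S hS => ?_
        rw [Finset.mem_powerset] at hS
        have hSq : ∀ x ∈ S, x.val ≤ α.val := fun x hx => (Finset.mem_filter.1 (hS hx)).2
        rw [coeffA_union ρ t (fun β => β.val ≤ α.val) S T hSq hTq,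
          union_filter_eq_right (fun β => β.val ≤ α.val) S T hSq hTq]
        ring_nf
    _ = ((∏ β ∈ ((Finset.univ : Finset (Fin n)).filter (fun β => ¬ β.val ≤ α.val)) \ T,
            Real.exp (-(ρ β * t))) * ∏ β ∈ T, (1 - Real.exp (-(ρ β * t)))) •
          marg X (fun i => ¬ i.val ≤ α.val) (RG X T ω₀) := by
        rw [← Finset.sum_smul]
        congr 1
        rw [← Finset.mul_sum, sum_exp_split, mul_one]

/-- The key identity: the recombinator applied to the solution. -/
lemma R_sol (α : Fin n) (ρ : Fin n → ℝ) (hρ : ∀ β, 0 < ρ β) {ω₀ : Meas X}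
    (h₀ : Pos X ω₀) (hω₀ : ω₀ ≠ 0) {t : ℝ} (ht : 0 ≤ t) :
    R X α (sol X ρ ω₀ t)
      = ∑ G ∈ (Finset.univ : Finset (Fin n)).powerset,
          coeffA ρ G t • RG X (insert α G) ω₀ := by
  have hm : 0 < mass X ω₀ := mass_pos_of_ne_zero X h₀ hω₀
  have hspos : Pos X (sol X ρ ω₀ t) := Pos_sol X ρ hρ h₀ ht
  have hsmass : mass X (sol X ρ ω₀ t) = mass X ω₀ := mass_sol X ρ h₀ t
  have hsne : sol X ρ ω₀ t ≠ 0 := ne_zero_of_mass_pos X (by rw [hsmass]; exact hm)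
  rw [R_apply_ne_zero X α _ hsne, tv_eq_mass X hspos, hsmass]
  rw [marg_le_sol X α ρ hρ h₀ t, marg_gt_sol X α ρ hρ h₀ t, prodM_sum_sum]
  -- now transform the right-hand side into the same double sum
  have stepG : ∀ G : Finset (Fin n), coeffA ρ G t • RG X (insert α G) ω₀
      = coeffA ρ G t • ((mass X ω₀)⁻¹ • prodM X (fun i => i.val ≤ α.val)
          (marg X (fun i => i.val ≤ α.val) (RG X (G.filter (fun β => β.val ≤ α.val)) ω₀))
          (marg X (fun i => ¬ i.val ≤ α.val)
            (RG X (G.filter (fun β => ¬ β.val ≤ α.val)) ω₀))) := by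
    intro G
    rw [RG_insert_eq_prod X α G h₀ hω₀, marg_le_RG_filter X α G h₀,
      marg_gt_RG_filter X α G h₀]
  rw [Finset.sum_congr rfl fun G _ => stepG G]
  rw [sum_powerset_pair (fun β : Fin n => β.val ≤ α.val)
    (fun G => coeffA ρ G t • ((mass X ω₀)⁻¹ • prodM X (fun i => i.val ≤ α.val)
      (marg X (fun i => i.val ≤ α.val) (RG X (G.filter (fun β => β.val ≤ α.val)) ω₀))
      (marg X (fun i => ¬ i.val ≤ α.val)
        (RG X (G.filter (fun β => ¬ β.val ≤ α.val)) ω₀))))]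
  rw [Finset.smul_sum]
  refine Finset.sum_congr rfl fun S hS => ?_
  rw [Finset.smul_sum]
  refine Finset.sum_congr rfl fun T hT => ?_
  rw [Finset.mem_powerset] at hS hT
  have hSq : ∀ x ∈ S, x.val ≤ α.val := fun x hx => (Finset.mem_filter.1 (hS hx)).2
  have hTq : ∀ x ∈ T, ¬ x.val ≤ α.val := fun x hx => (Finset.mem_filter.1 (hT hx)).2
  rw [coeffA_union ρ t (fun β => β.val ≤ α.val) S T hSq hTq,
    union_filter_eq_left (fun β => β.val ≤ α.val) S T hSq hTq,
    union_filter_eq_right (fun β => β.val ≤ α.val) S T hSq hTq]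
  rw [smul_comm]
/-! ### the derivative of the coefficients -/

lemma coeffA_hasDerivAt (ρ : Fin n → ℝ) (G : Finset (Fin n)) (t : ℝ) :
    HasDerivAt (fun s => coeffA ρ G s)
      ((∑ β ∈ G, ρ β * coeffA ρ (G.erase β) t) -
        (∑ β ∈ Gᶜ, ρ β) * coeffA ρ G t) t := by
  have he : ∀ β : Fin n, HasDerivAt (fun s => Real.exp (-(ρ β * s)))
      (Real.exp (-(ρ β * t)) * (-(ρ β))) t := by
    intro β
    have h1 : HasDerivAt (fun s : ℝ => -(ρ β * s)) (-(ρ β)) t := by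
      have := ((hasDerivAt_id t).const_mul (ρ β)).neg
      simp at this
      exact this
    exact h1.exp
  have hA : HasDerivAt (fun s => ∏ β ∈ Gᶜ, Real.exp (-(ρ β * s)))
      (∑ β ∈ Gᶜ, (∏ γ ∈ Gᶜ.erase β, Real.exp (-(ρ γ * t))) •
        (Real.exp (-(ρ β * t)) * (-(ρ β)))) t :=
    HasDerivAt.fun_finsetProd (fun β _ => he β)
  have hB : HasDerivAt (fun s => ∏ β ∈ G, (1 - Real.exp (-(ρ β * s))))
      (∑ β ∈ G, (∏ γ ∈ G.erase β, (1 - Real.exp (-(ρ γ * t)))) •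
        (-(Real.exp (-(ρ β * t)) * (-(ρ β))))) t :=
    HasDerivAt.fun_finsetProd (fun β _ => (he β).const_sub 1)
  have hAB := hA.mul hB
  have key : (∑ β ∈ G, ρ β * coeffA ρ (G.erase β) t) - (∑ β ∈ Gᶜ, ρ β) * coeffA ρ G t
      = (∑ β ∈ Gᶜ, (∏ γ ∈ Gᶜ.erase β, Real.exp (-(ρ γ * t))) •
          (Real.exp (-(ρ β * t)) * (-(ρ β)))) * (∏ β ∈ G, (1 - Real.exp (-(ρ β * t))))
        + (∏ β ∈ Gᶜ, Real.exp (-(ρ β * t))) *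
          (∑ β ∈ G, (∏ γ ∈ G.erase β, (1 - Real.exp (-(ρ γ * t)))) •
            (-(Real.exp (-(ρ β * t)) * (-(ρ β))))) := by
    simp only [smul_eq_mul]
    conv_rhs => rw [Finset.sum_mul, Finset.mul_sum]
    have e1 : ∀ β ∈ Gᶜ, (∏ γ ∈ Gᶜ.erase β, Real.exp (-(ρ γ * t))) *
        (Real.exp (-(ρ β * t)) * (-(ρ β))) * (∏ β ∈ G, (1 - Real.exp (-(ρ β * t))))
        = -(ρ β * coeffA ρ G t) := by
      intro β hβ
      rw [coeffA, ← Finset.mul_prod_erase _ _ hβ]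
      ring
    have e2 : ∀ β ∈ G, (∏ β ∈ Gᶜ, Real.exp (-(ρ β * t))) *
        ((∏ γ ∈ G.erase β, (1 - Real.exp (-(ρ γ * t)))) *
          (-(Real.exp (-(ρ β * t)) * (-(ρ β)))))
        = ρ β * coeffA ρ (G.erase β) t := by
      intro β hβ
      rw [coeffA, Finset.compl_erase, Finset.prod_insert (by
        rw [Finset.mem_compl]; exact fun hc => hc hβ)]
      ring
    rw [Finset.sum_congr rfl e1, Finset.sum_congr rfl e2]
    rw [Finset.sum_neg_distrib, ← Finset.sum_mul]
    ring
  rw [key]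
  exact hAB

lemma sol_hasDerivAt (ρ : Fin n → ℝ) (ω₀ : Meas X) (t : ℝ) :
    HasDerivAt (fun s => sol X ρ ω₀ s)
      (∑ G ∈ (Finset.univ : Finset (Fin n)).powerset,
        ((∑ β ∈ G, ρ β * coeffA ρ (G.erase β) t) -
          (∑ β ∈ Gᶜ, ρ β) * coeffA ρ G t) • RG X G ω₀) t := by
  have : ∀ G ∈ (Finset.univ : Finset (Fin n)).powerset,
      HasDerivAt (fun s => coeffA ρ G s • RG X G ω₀)
        (((∑ β ∈ G, ρ β * coeffA ρ (G.erase β) t) -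
          (∑ β ∈ Gᶜ, ρ β) * coeffA ρ G t) • RG X G ω₀) t :=
    fun G _ => (coeffA_hasDerivAt ρ G t).smul_const (RG X G ω₀)
  exact HasDerivAt.fun_sum this

/-! ### reindexing the insert sum -/

lemma sum_insert_reindex {M : Type*} [AddCommMonoid M] [Module ℝ M] (α : Fin n)
    (c : Finset (Fin n) → ℝ) (v : Finset (Fin n) → M) :
    ∑ G ∈ (Finset.univ : Finset (Fin n)).powerset, c G • v (insert α G)
      = ∑ G ∈ (Finset.univ : Finset (Fin n)).powerset,
          (if α ∈ G then c G + c (G.erase α) else 0) • v G := by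
  rw [← Finset.sum_filter_add_sum_filter_not
      ((Finset.univ : Finset (Fin n)).powerset) (fun G => α ∈ G)
      (fun G => c G • v (insert α G)),
    ← Finset.sum_filter_add_sum_filter_not
      ((Finset.univ : Finset (Fin n)).powerset) (fun G => α ∈ G)
      (fun G => (if α ∈ G then c G + c (G.erase α) else 0) • v G)]
  have p1 : ∑ G ∈ ((Finset.univ : Finset (Fin n)).powerset).filter (fun G => α ∈ G),
      c G • v (insert α G)
      = ∑ G ∈ ((Finset.univ : Finset (Fin n)).powerset).filter (fun G => α ∈ G),
          c G • v G := by
    refine Finset.sum_congr rfl fun G hG => ?_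
    rw [Finset.insert_eq_of_mem (Finset.mem_filter.1 hG).2]
  have p2 : ∑ G ∈ ((Finset.univ : Finset (Fin n)).powerset).filter (fun G => ¬ α ∈ G),
      c G • v (insert α G)
      = ∑ G ∈ ((Finset.univ : Finset (Fin n)).powerset).filter (fun G => α ∈ G),
          c (G.erase α) • v G := by
    refine Finset.sum_nbij' (fun G => insert α G) (fun H => H.erase α) ?_ ?_ ?_ ?_ ?_
    · intro G hG
      rw [Finset.mem_filter]
      exact ⟨Finset.mem_powerset.2 (Finset.subset_univ _), Finset.mem_insert_self α G⟩
    · intro H hH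
      rw [Finset.mem_filter]
      refine ⟨Finset.mem_powerset.2 (Finset.subset_univ _), Finset.notMem_erase α H⟩
    · intro G hG
      exact Finset.erase_insert (Finset.mem_filter.1 hG).2
    · intro H hH
      exact Finset.insert_erase (Finset.mem_filter.1 hH).2
    · intro G hG
      rw [Finset.erase_insert (Finset.mem_filter.1 hG).2]
  have p3 : ∑ G ∈ ((Finset.univ : Finset (Fin n)).powerset).filter (fun G => α ∈ G),
      (if α ∈ G then c G + c (G.erase α) else 0) • v G
      = (∑ G ∈ ((Finset.univ : Finset (Fin n)).powerset).filter (fun G => α ∈ G),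
          c G • v G)
        + ∑ G ∈ ((Finset.univ : Finset (Fin n)).powerset).filter (fun G => α ∈ G),
            c (G.erase α) • v G := by
    rw [← Finset.sum_add_distrib]
    refine Finset.sum_congr rfl fun G hG => ?_
    rw [if_pos (Finset.mem_filter.1 hG).2, add_smul]
  have p4 : ∑ G ∈ ((Finset.univ : Finset (Fin n)).powerset).filter (fun G => ¬ α ∈ G),
      (if α ∈ G then c G + c (G.erase α) else 0) • v G = 0 := by
    refine Finset.sum_eq_zero fun G hG => ?_
    rw [if_neg (Finset.mem_filter.1 hG).2, zero_smul]
  rw [p1, p2, p3, p4, add_zero]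

/-! ### the scalar identity -/

lemma scalar_identity (ρ : Fin n → ℝ) (t : ℝ) (G : Finset (Fin n)) :
    ∑ α : Fin n, ρ α *
        ((if α ∈ G then coeffA ρ G t + coeffA ρ (G.erase α) t else 0) - coeffA ρ G t)
      = (∑ β ∈ G, ρ β * coeffA ρ (G.erase β) t) - (∑ β ∈ Gᶜ, ρ β) * coeffA ρ G t := by
  rw [← Finset.sum_add_sum_compl G (fun α => ρ α *
    ((if α ∈ G then coeffA ρ G t + coeffA ρ (G.erase α) t else 0) - coeffA ρ G t))]
  have e1 : ∀ α ∈ G, ρ α *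
      ((if α ∈ G then coeffA ρ G t + coeffA ρ (G.erase α) t else 0) - coeffA ρ G t)
      = ρ α * coeffA ρ (G.erase α) t := by
    intro α hα
    rw [if_pos hα]
    ring
  have e2 : ∀ α ∈ Gᶜ, ρ α *
      ((if α ∈ G then coeffA ρ G t + coeffA ρ (G.erase α) t else 0) - coeffA ρ G t)
      = -(ρ α * coeffA ρ G t) := by
    intro α hα
    rw [if_neg (Finset.mem_compl.1 hα)]
    ring
  rw [Finset.sum_congr rfl e1, Finset.sum_congr rfl e2, Finset.sum_neg_distrib,
    ← Finset.sum_mul, sub_eq_add_neg]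
/-! ### initial value -/

lemma applyL_zero (l : List (Fin n)) : applyL X l 0 = 0 := by
  induction l with
  | nil => rfl
  | cons β l ih => rw [applyL_cons, ih, R_zero]

lemma RG_zero (G : Finset (Fin n)) : RG X G 0 = 0 := applyL_zero X _

lemma coeffA_empty_zero (ρ : Fin n → ℝ) : coeffA ρ (∅ : Finset (Fin n)) 0 = 1 := by
  simp [coeffA]

lemma coeffA_zero_of_ne_empty (ρ : Fin n → ℝ) {G : Finset (Fin n)} (hG : G ≠ ∅) :
    coeffA ρ G 0 = 0 := by
  obtain ⟨β, hβ⟩ := Finset.nonempty_iff_ne_empty.2 hG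
  rw [coeffA, Finset.prod_eq_zero hβ (by simp), mul_zero]

lemma RG_empty (ω : Meas X) : RG X ∅ ω = ω := by
  rw [RG_eq_applyL, Finset.sort_empty, applyL_nil]

lemma sol_init (ρ : Fin n → ℝ) (ω₀ : Meas X) : sol X ρ ω₀ 0 = ω₀ := by
  rw [sol, Finset.sum_eq_single (∅ : Finset (Fin n))]
  · rw [coeffA_empty_zero, RG_empty, one_smul]
  · intro G _ hG
    rw [coeffA_zero_of_ne_empty ρ hG, zero_smul]
  · intro h
    exact absurd (Finset.mem_powerset.2 (Finset.empty_subset _)) h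

/-! ### the main theorem -/

lemma main_aux (ρ : Fin n → ℝ) (hρ : ∀ α, 0 < ρ α)
    (ω₀ : Meas X) (h₀ : Pos X ω₀) :
    sol X ρ ω₀ 0 = ω₀ ∧
    ∀ t : ℝ, 0 ≤ t →
      HasDerivAt (fun s => sol X ρ ω₀ s)
        (∑ α : Fin n, ρ α • (R X α (sol X ρ ω₀ t) - sol X ρ ω₀ t)) t ∧
      Pos X (sol X ρ ω₀ t) ∧ mass X (sol X ρ ω₀ t) = mass X ω₀ := by
  refine ⟨sol_init X ρ ω₀, fun t ht => ?_⟩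
  by_cases hω₀ : ω₀ = 0
  · subst hω₀
    have hz : ∀ s : ℝ, sol X ρ 0 s = 0 := by
      intro s
      rw [sol]
      exact Finset.sum_eq_zero fun G _ => by rw [RG_zero, smul_zero]
    refine ⟨?_, ?_, ?_⟩
    · have hf : (fun s => sol X ρ (0 : Meas X) s) = fun _ => (0 : Meas X) := funext hz
      rw [hf]
      have hd : (∑ α : Fin n, ρ α • (R X α (sol X ρ 0 t) - sol X ρ 0 t)) = 0 := by
        rw [hz t]
        simp [R_zero]
      rw [hd]
      exact hasDerivAt_const t 0
    · rw [hz t]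
      intro x
      exact le_refl 0
    · rw [hz t]
  · refine ⟨?_, Pos_sol X ρ hρ h₀ ht, mass_sol X ρ h₀ t⟩
    have h1 := sol_hasDerivAt X ρ ω₀ t
    have h2 : (∑ G ∈ (Finset.univ : Finset (Fin n)).powerset,
        ((∑ β ∈ G, ρ β * coeffA ρ (G.erase β) t) -
          (∑ β ∈ Gᶜ, ρ β) * coeffA ρ G t) • RG X G ω₀)
        = ∑ α : Fin n, ρ α • (R X α (sol X ρ ω₀ t) - sol X ρ ω₀ t) := by
      symm
      calc ∑ α : Fin n, ρ α • (R X α (sol X ρ ω₀ t) - sol X ρ ω₀ t)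
          = ∑ α : Fin n, ρ α •
              ((∑ G ∈ (Finset.univ : Finset (Fin n)).powerset,
                coeffA ρ G t • RG X (insert α G) ω₀) - sol X ρ ω₀ t) := by
            refine Finset.sum_congr rfl fun α _ => ?_
            rw [R_sol X α ρ hρ h₀ hω₀ ht]
        _ = ∑ α : Fin n, ρ α •
              ((∑ G ∈ (Finset.univ : Finset (Fin n)).powerset,
                (if α ∈ G then coeffA ρ G t + coeffA ρ (G.erase α) t else 0) • RG X G ω₀)
               - ∑ G ∈ (Finset.univ : Finset (Fin n)).powerset,
                   coeffA ρ G t • RG X G ω₀) := by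
            refine Finset.sum_congr rfl fun α _ => ?_
            rw [sum_insert_reindex α (fun G => coeffA ρ G t) (fun G => RG X G ω₀), sol]
        _ = ∑ α : Fin n, ∑ G ∈ (Finset.univ : Finset (Fin n)).powerset,
              (ρ α * ((if α ∈ G then coeffA ρ G t + coeffA ρ (G.erase α) t else 0)
                - coeffA ρ G t)) • RG X G ω₀ := by
            refine Finset.sum_congr rfl fun α _ => ?_
            rw [← Finset.sum_sub_distrib, Finset.smul_sum]
            refine Finset.sum_congr rfl fun G _ => ?_
            rw [← sub_smul, smul_smul]
        _ = ∑ G ∈ (Finset.univ : Finset (Fin n)).powerset, ∑ α : Fin n,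
              (ρ α * ((if α ∈ G then coeffA ρ G t + coeffA ρ (G.erase α) t else 0)
                - coeffA ρ G t)) • RG X G ω₀ := Finset.sum_comm
        _ = ∑ G ∈ (Finset.univ : Finset (Fin n)).powerset,
              (∑ α : Fin n, ρ α * ((if α ∈ G then coeffA ρ G t + coeffA ρ (G.erase α) t
                else 0) - coeffA ρ G t)) • RG X G ω₀ := by
            refine Finset.sum_congr rfl fun G _ => (Finset.sum_smul).symm
        _ = ∑ G ∈ (Finset.univ : Finset (Fin n)).powerset,
              ((∑ β ∈ G, ρ β * coeffA ρ (G.erase β) t) -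
                (∑ β ∈ Gᶜ, ρ β) * coeffA ρ G t) • RG X G ω₀ := by
            refine Finset.sum_congr rfl fun G _ => ?_
            rw [scalar_identity]
    rw [← h2]
    exact h1

/-- exact solution of the recombination ODE: with
`ω_t := ∑_{G⊆L} a_G(t) R_G(ω₀)` for a finite positive measure `ω₀`, one has
`ω_0 = ω₀` and `d/dt ω_t = ∑_{α∈L} ρ_α (R_α(ω_t) − ω_t)`; moreover `ω_t` is a
positive measure of the same total mass as `ω₀` for all `t ≥ 0`. -/
theorem sol_solves_recombination_ode (ρ : Fin n → ℝ) (hρ : ∀ α, 0 < ρ α)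
    (ω₀ : Meas X) (h₀ : Pos X ω₀) :
    sol X ρ ω₀ 0 = ω₀ ∧
    ∀ t : ℝ, 0 ≤ t →
      HasDerivAt (fun s => sol X ρ ω₀ s)
        (∑ α : Fin n, ρ α • (R X α (sol X ρ ω₀ t) - sol X ρ ω₀ t)) t ∧
      Pos X (sol X ρ ω₀ t) ∧ mass X (sol X ρ ω₀ t) = mass X ω₀ := by
  exact main_aux X ρ hρ ω₀ h₀

end Recombination
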